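/- Let Ω ⊆ ℝ³ be open and u : Ω → ℝ³ three times continuously differentiable. Then curl((curl(ε u))ᵀ) = 0 on Ω, where ε u = (grad u + (grad u)ᵀ)/2 is the symmetric gradient; that is, J ∘ ε = 0. -/

import Mathlib

open Matrix

/-- The partial derivative `∂ⱼ f` of a scalar field on `ℝ³`. -/
noncomputable def pd (j : Fin 3) (f : (Fin 3 → ℝ) → ℝ) (x : Fin 3 → ℝ) : ℝ :=
  fderiv ℝ f x (Pi.single j 1)

/-- The curl of a vector field `u : ℝ³ → ℝ³`. -/
noncomputable def curlVec (u : (Fin 3 → ℝ) → (Fin 3 → ℝ)) (x : Fin 3 → ℝ) : Fin 3 → ℝ :=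
  ![pd 1 (fun y => u y 2) x - pd 2 (fun y => u y 1) x,
    pd 2 (fun y => u y 0) x - pd 0 (fun y => u y 2) x,
    pd 0 (fun y => u y 1) x - pd 1 (fun y => u y 0) x]

/-- The row-wise curl of a matrix field. -/
noncomputable def curlMat (τ : (Fin 3 → ℝ) → Matrix (Fin 3) (Fin 3) ℝ)
    (x : Fin 3 → ℝ) : Matrix (Fin 3) (Fin 3) ℝ :=
  Matrix.of fun i j => curlVec (fun y => τ y i) x j

/-- The Jacobian matrix `(grad u)ᵢⱼ = ∂ⱼuᵢ` of a vector field `u : ℝ³ → ℝ³`. -/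
noncomputable def gradM (u : (Fin 3 → ℝ) → (Fin 3 → ℝ)) (x : Fin 3 → ℝ) :
    Matrix (Fin 3) (Fin 3) ℝ :=
  Matrix.of fun i j => pd j (fun y => u y i) x

/-- The symmetric gradient `ε u = (grad u + (grad u)ᵀ)/2`. -/
noncomputable def symGrad (u : (Fin 3 → ℝ) → (Fin 3 → ℝ)) (x : Fin 3 → ℝ) :
    Matrix (Fin 3) (Fin 3) ℝ :=
  (1 / 2 : ℝ) • (gradM u x + (gradM u x)ᵀ)

section aux
variable {Ω : Set (Fin 3 → ℝ)} {f g : (Fin 3 → ℝ) → ℝ} {x : Fin 3 → ℝ}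

lemma pd_congr_nhds (h : f =ᶠ[nhds x] g) (j : Fin 3) : pd j f x = pd j g x := by
  unfold pd; rw [h.fderiv_eq]

lemma pd_sub (hf : DifferentiableAt ℝ f x) (hg : DifferentiableAt ℝ g x) (j : Fin 3) :
    pd j (fun y => f y - g y) x = pd j f x - pd j g x := by
  unfold pd; rw [fderiv_fun_sub hf hg]; rfl

lemma pd_add (hf : DifferentiableAt ℝ f x) (hg : DifferentiableAt ℝ g x) (j : Fin 3) :
    pd j (fun y => f y + g y) x = pd j f x + pd j g x := by
  unfold pd; rw [fderiv_fun_add hf hg]; rfl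

lemma pd_const_mul (hf : DifferentiableAt ℝ f x) (c : ℝ) (j : Fin 3) :
    pd j (fun y => c * f y) x = c * pd j f x := by
  unfold pd; rw [fderiv_const_mul hf c]; rfl

lemma contDiffOn_pd (hΩ : IsOpen Ω) {n m : WithTop ℕ∞} (hf : ContDiffOn ℝ n f Ω)
    (h : m + 1 ≤ n) (j : Fin 3) : ContDiffOn ℝ m (pd j f) Ω :=
  (hf.fderiv_of_isOpen hΩ h).clm_apply contDiffOn_const

lemma pd_clm_apply {F : (Fin 3 → ℝ) → (Fin 3 → ℝ) →L[ℝ] ℝ} (hF : DifferentiableAt ℝ F x)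
    (v : Fin 3 → ℝ) (a : Fin 3) :
    pd a (fun y => F y v) x = fderiv ℝ F x (Pi.single a 1) v := by
  unfold pd
  have h := ((ContinuousLinearMap.apply ℝ ℝ v).hasFDerivAt).comp x hF.hasFDerivAt
  have h2 : HasFDerivAt (fun y => F y v)
      ((ContinuousLinearMap.apply ℝ ℝ v).comp (fderiv ℝ F x)) x := h
  rw [h2.fderiv]
  rfl

lemma pd_comm (hΩ : IsOpen Ω) (hf : ContDiffOn ℝ 2 f Ω) (hx : x ∈ Ω) (a b : Fin 3) :
    pd a (fun y => pd b f y) x = pd b (fun y => pd a f y) x := by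
  have hF : ContDiffOn ℝ 1 (fderiv ℝ f) Ω := hf.fderiv_of_isOpen hΩ (by norm_num)
  have hFd : DifferentiableAt ℝ (fderiv ℝ f) x :=
    (hF.differentiableOn (by norm_num)).differentiableAt (hΩ.mem_nhds hx)
  have hev : ∀ᶠ y in nhds x, HasFDerivAt f (fderiv ℝ f y) y := by
    filter_upwards [hΩ.mem_nhds hx] with y hy
    exact ((hf.differentiableOn (by norm_num)).differentiableAt (hΩ.mem_nhds hy)).hasFDerivAt
  have hsym := second_derivative_symmetric_of_eventually hev hFd.hasFDerivAt
  have h1 : pd a (fun y => pd b f y) x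
      = fderiv ℝ (fderiv ℝ f) x (Pi.single a 1) (Pi.single b 1) := pd_clm_apply hFd _ a
  have h2 : pd b (fun y => pd a f y) x
      = fderiv ℝ (fderiv ℝ f) x (Pi.single b 1) (Pi.single a 1) := pd_clm_apply hFd _ b
  rw [h1, h2, hsym]

end aux

/-- `(1/2)(∂q u_p + ∂p u_q)`, the `(p,q)` entry of the symmetric gradient. -/
noncomputable def sg (u : (Fin 3 → ℝ) → (Fin 3 → ℝ)) (p q : Fin 3) :
    (Fin 3 → ℝ) → ℝ :=
  fun z => 1 / 2 * (pd q (fun w => u w p) z + pd p (fun w => u w q) z)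

lemma key {Ω : Set (Fin 3 → ℝ)} (hΩ : IsOpen Ω) {u : (Fin 3 → ℝ) → (Fin 3 → ℝ)}
    (hu : ContDiffOn ℝ 3 u Ω) {x : Fin 3 → ℝ} (hx : x ∈ Ω) (a b c d : Fin 3) :
    pd a (fun y => pd c (sg u b d) y - pd d (sg u b c) y) x
      - pd b (fun y => pd c (sg u a d) y - pd d (sg u a c) y) x = 0 := by
  have hmem := hΩ.mem_nhds hx
  have hf : ∀ k, ContDiffOn ℝ 3 (fun w => u w k) Ω := fun k =>
    (ContinuousLinearMap.proj k : ((Fin 3 → ℝ) →L[ℝ] ℝ)).contDiff.comp_contDiffOn hu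
  have hg : ∀ j k, ContDiffOn ℝ 2 (pd j (fun w => u w k)) Ω := fun j k =>
    contDiffOn_pd hΩ (hf k) (by norm_num) j
  have hgg : ∀ i j k, ContDiffOn ℝ 1 (pd i (pd j (fun w => u w k))) Ω := fun i j k =>
    contDiffOn_pd hΩ (hg j k) (by norm_num) i
  have hggd : ∀ i j k, DifferentiableAt ℝ (pd i (pd j (fun w => u w k))) x := fun i j k =>
    ((hgg i j k).differentiableOn one_ne_zero).differentiableAt hmem
  have hs : ∀ p q, ContDiffOn ℝ 2 (sg u p q) Ω := fun p q =>
    contDiffOn_const.mul ((hg q p).add (hg p q))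
  have hsd : ∀ p q c, DifferentiableAt ℝ (fun y => pd c (sg u p q) y) x := fun p q c =>
    (((contDiffOn_pd hΩ (hs p q) (by norm_num) c).differentiableOn
      one_ne_zero).differentiableAt hmem)
  rw [pd_sub (hsd b d c) (hsd b c d) a, pd_sub (hsd a d c) (hsd a c d) b]
  -- expand each `pd α (pd β (sg u p q)) x` into third derivatives
  have expand : ∀ (α β p q : Fin 3),
      pd α (fun y => pd β (sg u p q) y) x
        = 1 / 2 * (pd α (pd β (pd q (fun w => u w p))) x
            + pd α (pd β (pd p (fun w => u w q))) x) := by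
    intro α β p q
    have hev : (fun y => pd β (sg u p q) y) =ᶠ[nhds x]
        (fun y => 1 / 2 * (pd β (pd q (fun w => u w p)) y
            + pd β (pd p (fun w => u w q)) y)) := by
      filter_upwards [hmem] with y hy
      have d1 : DifferentiableAt ℝ (pd q (fun w => u w p)) y :=
        ((hg q p).differentiableOn (by norm_num)).differentiableAt (hΩ.mem_nhds hy)
      have d2 : DifferentiableAt ℝ (pd p (fun w => u w q)) y :=
        ((hg p q).differentiableOn (by norm_num)).differentiableAt (hΩ.mem_nhds hy)
      have : pd β (sg u p q) y
          = pd β (fun z => 1 / 2 * (pd q (fun w => u w p) z + pd p (fun w => u w q) z)) y := rfl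
      rw [this, pd_const_mul (d1.fun_add d2) _ β, pd_add d1 d2 β]
    rw [pd_congr_nhds hev α, pd_const_mul ((hggd β q p).fun_add (hggd β p q)) _ α,
      pd_add (hggd β q p) (hggd β p q) α]
  rw [expand a c b d, expand a d b c, expand b c a d, expand b d a c]
  -- symmetry of third derivatives
  have sw1 : ∀ (α β γ k : Fin 3),
      pd α (pd β (pd γ (fun w => u w k))) x = pd β (pd α (pd γ (fun w => u w k))) x :=
    fun α β γ k => pd_comm hΩ (hg γ k) hx α β
  have sw2 : ∀ (α β γ k : Fin 3),
      pd α (pd β (pd γ (fun w => u w k))) x = pd α (pd γ (pd β (fun w => u w k))) x := by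
    intro α β γ k
    apply pd_congr_nhds _ α
    filter_upwards [hmem] with y hy
    exact pd_comm hΩ ((hf k).of_le (by norm_num)) hy β γ
  have e1 : pd a (pd c (pd d (fun w => u w b))) x = pd a (pd d (pd c (fun w => u w b))) x :=
    sw2 a c d b
  have e2 : pd a (pd c (pd b (fun w => u w d))) x = pd b (pd c (pd a (fun w => u w d))) x := by
    rw [sw1 a c b d, sw1 b c a d, sw2 c b a d]
  have e3 : pd a (pd d (pd b (fun w => u w c))) x = pd b (pd d (pd a (fun w => u w c))) x := by
    rw [sw1 a d b c, sw1 b d a c, sw2 d b a c]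
  have e4 : pd b (pd c (pd d (fun w => u w a))) x = pd b (pd d (pd c (fun w => u w a))) x :=
    sw2 b c d a
  linarith [e1, e2, e3, e4]

/-- If `u : Ω → ℝ³` is `C³` on an open set `Ω ⊆ ℝ³`, then
`curl((curl(ε u))ᵀ) = 0` on `Ω`; that is, `J ∘ ε = 0`. -/
theorem J_eps_eq_zero (Ω : Set (Fin 3 → ℝ)) (hΩ : IsOpen Ω)
    (u : (Fin 3 → ℝ) → (Fin 3 → ℝ)) (hu : ContDiffOn ℝ 3 u Ω) :
    ∀ x ∈ Ω, curlMat (fun y => (curlMat (fun z => symGrad u z) y)ᵀ) x = 0 := by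
  intro x hx
  ext i j
  fin_cases i <;> fin_cases j <;>
    simp only [curlMat, curlVec, symGrad, gradM, of_apply, transpose_apply, Matrix.smul_apply,
      Matrix.add_apply, cons_val_zero, cons_val_one, head_cons, cons_val_two, tail_cons,
      Matrix.zero_apply, smul_eq_mul, Fin.isValue, Fin.mk_one, Fin.mk_zero,
      Matrix.cons_val_fin_one, Matrix.head_fin_const]
  · exact key hΩ hu hx 1 2 1 2
  · exact key hΩ hu hx 2 0 1 2
  · exact key hΩ hu hx 0 1 1 2
  · exact key hΩ hu hx 1 2 2 0
  · exact key hΩ hu hx 2 0 2 0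
  · exact key hΩ hu hx 0 1 2 0
  · exact key hΩ hu hx 1 2 0 1
  · exact key hΩ hu hx 2 0 0 1
  · exact key hΩ hu hx 0 1 0 1
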